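/- For all integers n, t with n > 2t ≥ 2, the minimum size of a t-monopoly in C_m □ K_n is at most mt. -/

import Mathlib

open SimpleGraph

/-- `M` is a `t`-monopoly in `G`: every vertex outside `M` has at least `t` neighbors in `M`. -/
def IsMonopoly {V : Type*} (G : SimpleGraph V) (t : ℕ) (M : Set V) : Prop :=
  ∀ v ∉ M, t ≤ (G.neighborSet v ∩ M).ncard

/-- The `t`-monopoly number: least cardinality of a `t`-monopoly. -/
noncomputable def monNum {V : Type*} (G : SimpleGraph V) (t : ℕ) : ℕ :=
  sInf {k | ∃ M : Set V, IsMonopoly G t M ∧ M.ncard = k}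
/-- For `n > 2t ≥ 2`, `mon_t(C_m □ K_n) ≤ mt`. -/
theorem mon_cycle_complete_high (m n t : ℕ) (hm : 3 ≤ m) (ht : 1 ≤ t) (hn : 2 * t < n) :
    monNum ((cycleGraph m).boxProd (completeGraph (Fin n))) t ≤ m * t := by
  have htn : t < n := by omega
  set M : Set (Fin m × Fin n) := {p | (p.2 : ℕ) < t} with hM
  apply Nat.sInf_le
  refine ⟨M, ?_, ?_⟩
  · intro v hv
    simp only [hM, Set.mem_setOf_eq, not_lt] at hv
    set f : Fin t → Fin m × Fin n := fun k => (v.1, ⟨k, lt_trans k.2 htn⟩) with hf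
    have hinj : Function.Injective f := by
      intro a b hab
      simp only [hf, Prod.mk.injEq, Fin.mk.injEq] at hab
      exact Fin.ext hab.2
    have hsub : Set.range f ⊆ (((cycleGraph m).boxProd (completeGraph (Fin n))).neighborSet v ∩ M) := by
      rintro _ ⟨k, rfl⟩
      constructor
      · simp only [mem_neighborSet, boxProd_adj]
        right
        refine ⟨?_, rfl⟩
        simp only [completeGraph_eq_top, top_adj]
        intro h
        have : (v.2 : ℕ) = (k : ℕ) := by rw [h]
        omega
      · simp only [hM, Set.mem_setOf_eq]; exact k.2
    calc t = (Set.range f).ncard := by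
            rw [← Set.image_univ, Set.ncard_image_of_injective _ hinj, Set.ncard_univ]
            simp
      _ ≤ _ := Set.ncard_le_ncard hsub (Set.toFinite _)
  · have : M = ↑((Finset.univ : Finset (Fin m)) ×ˢ (Finset.univ.filter (fun j : Fin n => (j : ℕ) < t))) := by
      ext ⟨i, j⟩
      simp [hM]
    rw [this, Set.ncard_coe_finset, Finset.card_product, Finset.card_univ, Fintype.card_fin]
    congr 1
    have : (Finset.univ.filter (fun j : Fin n => (j : ℕ) < t)) =
        Finset.map (Fin.castLEEmb htn.le) Finset.univ := by
      ext j
      simp only [Finset.mem_filter, Finset.mem_univ, true_and, Finset.mem_map, Fin.castLEEmb]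
      constructor
      · intro h
        exact ⟨⟨j, h⟩, rfl⟩
      · rintro ⟨k, -, rfl⟩
        exact k.2
    rw [this, Finset.card_map, Finset.card_univ, Fintype.card_fin]
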